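/- Let τ be a finite Wang tileset admitting a tiling of the plane in which some row is horizontally periodic with period p > 0 (i.e. f(i+p,j₀) = f(i,j₀) for all i) and in which the row at height j₀ equals the row at height j₀ + m for some m > 0. Then τ admits a fully periodic tiling of the plane. -/
import Mathlib


structure WangTile (C : Type) where
  e : C
  w : C
  n : C
  s : C
deriving DecidableEq

def IsTiling {C : Type} (τ : Set (WangTile C)) (f : ℤ → ℤ → WangTile C) : Prop :=
  (∀ i j, f i j ∈ τ) ∧ (∀ i j, (f i j).e = (f (i+1) j).w) ∧
    (∀ i j, (f i j).n = (f i (j+1)).s)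

private lemma emod_step (q x : ℤ) (hq : 0 < q) :
    (x + 1) % q = x % q + 1 ∨ (x % q = q - 1 ∧ (x + 1) % q = 0) := by
  have h0 : 0 ≤ x % q := Int.emod_nonneg x (ne_of_gt hq)
  have h1 : x % q < q := Int.emod_lt_of_pos x hq
  have key : (x + 1) % q = (x % q + 1) % q := by
    conv_lhs => rw [← Int.emod_add_mul_ediv x q]
    rw [add_right_comm, Int.add_mul_emod_self_left]
  rcases lt_or_eq_of_le (by omega : x % q + 1 ≤ q) with h | h
  · left; rw [key, Int.emod_eq_of_lt (by omega) h]
  · right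
    constructor
    · omega
    · rw [key, h, Int.emod_self]

theorem stmt11 {C : Type} [Fintype C] (τ : Finset (WangTile C))
    (f : ℤ → ℤ → WangTile C) (hf : IsTiling (↑τ : Set (WangTile C)) f)
    (j₀ p m : ℤ) (hp : 0 < p) (hm : 0 < m)
    (hper : ∀ i, f (i + p) j₀ = f i j₀)
    (hrows : ∀ i, f i (j₀ + m) = f i j₀) :
    ∃ (g : ℤ → ℤ → WangTile C) (q : ℤ), IsTiling (↑τ : Set (WangTile C)) g ∧
      0 < q ∧ ∀ i j, g (i + q) j = g i j ∧ g i (j + q) = g i j := by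
  classical
  obtain ⟨hmem, hhor, hver⟩ := hf
  have hfin : Finite (WangTile C) := by
    have hinj : Function.Injective (fun t : WangTile C => (t.e, t.w, t.n, t.s)) := by
      intro a b h; cases a; cases b; simp_all
    exact Finite.of_injective _ hinj
  set M : ℕ := m.toNat with hMdef
  have hM : (M : ℤ) = m := Int.toNat_of_nonneg hm.le
  obtain ⟨a, b, hab, hvab⟩ := Finite.exists_ne_map_eq_of_infinite
    (fun k : ℕ => (fun t : Fin M => f (k : ℤ) (j₀ + (t : ℕ))))
  -- WLOG a < b
  wlog hlt : a < b generalizing a b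
  · exact this b a hab.symm hvab.symm (by omega)
  set A : ℤ := (a : ℤ) with hA
  set q : ℤ := (b : ℤ) - (a : ℤ) with hqdef
  have hq : 0 < q := by simp [hqdef]; exact_mod_cast hlt
  have hcol : ∀ r : ℤ, 0 ≤ r - j₀ → r - j₀ < m → f (A + q) r = f A r := by
    intro r h1 h2
    have htn : ((r - j₀).toNat : ℤ) = r - j₀ := Int.toNat_of_nonneg h1
    have htlt : (r - j₀).toNat < M := by omega
    have := congrFun hvab ⟨(r - j₀).toNat, htlt⟩
    have h3 : j₀ + ((r - j₀).toNat : ℤ) = r := by omega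
    rw [h3] at this
    have h4 : A + q = (b : ℤ) := by omega
    rw [h4, ← this]
  set φ : ℤ → ℤ := fun i => A + (i - A) % q with hφ
  set ψ : ℤ → ℤ := fun j => j₀ + (j - j₀) % m with hψ
  have hψb : ∀ j, 0 ≤ (j - j₀) % m ∧ (j - j₀) % m < m := fun j =>
    ⟨Int.emod_nonneg _ (ne_of_gt hm), Int.emod_lt_of_pos _ hm⟩
  refine ⟨fun i j => f (φ i) (ψ j), q * m, ⟨?_, ?_, ?_⟩, by positivity, ?_⟩
  · intro i j; exact hmem _ _
  · -- horizontal
    intro i j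
    show (f (φ i) (ψ j)).e = (f (φ (i+1)) (ψ j)).w
    rcases emod_step q (i - A) hq with h | ⟨h1, h2⟩
    · have : φ (i + 1) = φ i + 1 := by
        simp only [hφ]
        have : i + 1 - A = (i - A) + 1 := by ring
        rw [this, h]; ring
      rw [this]; exact hhor (φ i) (ψ j)
    · have e1 : φ i = A + q - 1 := by simp only [hφ, h1]; ring
      have e2 : φ (i + 1) = A := by
        simp only [hφ]
        have : i + 1 - A = (i - A) + 1 := by ring
        rw [this, h2]; ring
      rw [e1, e2]
      have := hhor (A + q - 1) (ψ j)
      rw [show A + q - 1 + 1 = A + q by ring] at this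
      rw [this, hcol (ψ j) (by have := hψb j; simp only [hψ]; omega)
        (by have := hψb j; simp only [hψ]; omega)]
  · -- vertical
    intro i j
    show (f (φ i) (ψ j)).n = (f (φ i) (ψ (j+1))).s
    rcases emod_step m (j - j₀) hm with h | ⟨h1, h2⟩
    · have : ψ (j + 1) = ψ j + 1 := by
        simp only [hψ]
        have : j + 1 - j₀ = (j - j₀) + 1 := by ring
        rw [this, h]; ring
      rw [this]; exact hver (φ i) (ψ j)
    · have e1 : ψ j = j₀ + m - 1 := by simp only [hψ, h1]; ring
      have e2 : ψ (j + 1) = j₀ := by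
        simp only [hψ]
        have : j + 1 - j₀ = (j - j₀) + 1 := by ring
        rw [this, h2]; ring
      rw [e1, e2]
      have := hver (φ i) (j₀ + m - 1)
      rw [show j₀ + m - 1 + 1 = j₀ + m by ring, hrows (φ i)] at this
      exact this
  · -- periodicity
    intro i j
    constructor
    · show f (φ (i + q * m)) (ψ j) = f (φ i) (ψ j)
      have : φ (i + q * m) = φ i := by
        simp only [hφ]
        have : i + q * m - A = (i - A) + q * m := by ring
        rw [this, Int.add_mul_emod_self_left]
      rw [this]
    · show f (φ i) (ψ (j + q * m)) = f (φ i) (ψ j)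
      have : ψ (j + q * m) = ψ j := by
        simp only [hψ]
        have : j + q * m - j₀ = (j - j₀) + m * q := by ring
        rw [this, Int.add_mul_emod_self_left]
      rw [this]
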